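/- For k = 1, the external field V(x) = x⁴/20 − 4x³/15 + x²/5 + 8x/5 and the density ψ(x) = (1/(10π))(x+2)^{1/2}(2−x)^{5/2} on [−2,2] satisfy the equilibrium condition: for all x ∈ (−2,2), the principal value integral 2 p.v.∫_{−2}^{2} ψ(s)/(x−s) ds equals V'(x) = x³/5 − 4x²/5 + 2x/5 + 8/5. -/

import Mathlib

open Real Filter

noncomputable def Ffun (x s : ℝ) : ℝ :=
  (4 - x) / 2 * (s * Real.sqrt (4 - s ^ 2))
    + (2 * x + 4 * (2 - x) + x * (2 - x) ^ 2) * Real.arcsin (s / 2)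
    + 1 / 3 * ((4 - s ^ 2) * Real.sqrt (4 - s ^ 2))
    - (2 - x) ^ 2 * Real.sqrt (4 - s ^ 2)
    + (2 - x) ^ 2 * Real.sqrt (4 - x ^ 2)
        * Real.log (4 - x * s + Real.sqrt (4 - x ^ 2) * Real.sqrt (4 - s ^ 2))

noncomputable def Gfun (x s : ℝ) : ℝ :=
  Ffun x s - (2 - x) ^ 2 * Real.sqrt (4 - x ^ 2) * Real.log (x - s)

lemma hasDerivAt_sqrt4 {s : ℝ} (hs : s ∈ Set.Ioo (-2 : ℝ) 2) :
    HasDerivAt (fun t : ℝ => Real.sqrt (4 - t ^ 2)) (-s / Real.sqrt (4 - s ^ 2)) s := by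
  have h4 : (0 : ℝ) < 4 - s ^ 2 := by nlinarith [hs.1, hs.2]
  have h := (Real.hasDerivAt_sqrt (ne_of_gt h4)).comp s
    ((hasDerivAt_const s (4 : ℝ)).sub (hasDerivAt_pow 2 s))
  have hr : Real.sqrt (4 - s ^ 2) ≠ 0 := by positivity
  refine h.congr_deriv ?_
  field_simp
  ring

lemma sqrt_half_eq {s : ℝ} (hs : s ∈ Set.Ioo (-2 : ℝ) 2) :
    Real.sqrt (1 - (s / 2) ^ 2) = Real.sqrt (4 - s ^ 2) / 2 := by
  rw [show (1 : ℝ) - (s / 2) ^ 2 = (4 - s ^ 2) / 4 by ring]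
  rw [Real.sqrt_div (by nlinarith [hs.1, hs.2] : (0:ℝ) ≤ 4 - s ^ 2)]
  rw [show (4 : ℝ) = 2 ^ 2 by norm_num, Real.sqrt_sq (by norm_num : (0:ℝ) ≤ 2)]

lemma hasDerivAt_Gfun {x s : ℝ} (hx : x ∈ Set.Ioo (-2 : ℝ) 2) (hs : s ∈ Set.Ioo (-2 : ℝ) 2)
    (hne : s ≠ x) :
    HasDerivAt (Gfun x) (Real.sqrt (4 - s ^ 2) * (2 - s) ^ 2 / (x - s)) s := by
  have h4s : (0 : ℝ) < 4 - s ^ 2 := by nlinarith [hs.1, hs.2]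
  have h4x : (0 : ℝ) < 4 - x ^ 2 := by nlinarith [hx.1, hx.2]
  have hr : 0 < Real.sqrt (4 - s ^ 2) := Real.sqrt_pos.2 h4s
  have hc : 0 < Real.sqrt (4 - x ^ 2) := Real.sqrt_pos.2 h4x
  set r := Real.sqrt (4 - s ^ 2) with hrdef
  set c := Real.sqrt (4 - x ^ 2) with hcdef
  have hr2 : r ^ 2 = 4 - s ^ 2 := Real.sq_sqrt h4s.le
  have hc2 : c ^ 2 = 4 - x ^ 2 := Real.sq_sqrt h4x.le
  have harg : 0 < 4 - x * s + c * r := by nlinarith [hx.1, hx.2, hs.1, hs.2, mul_pos hc hr]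
  have hxs : x - s ≠ 0 := sub_ne_zero.2 (Ne.symm hne)
  have hsq : HasDerivAt (fun t : ℝ => Real.sqrt (4 - t ^ 2)) (-s / r) s := hasDerivAt_sqrt4 hs
  -- piece 1 : t * sqrt(4-t^2)
  have h1 : HasDerivAt (fun t : ℝ => t * Real.sqrt (4 - t ^ 2))
      (1 * r + s * (-s / r)) s := (hasDerivAt_id s).mul hsq
  -- piece 2 : arcsin (t/2)
  have harcs : HasDerivAt (fun t : ℝ => Real.arcsin (t / 2)) (1 / r) s := by
    have hne1 : s / 2 ≠ -1 := by
      intro h; have := hs.1; rw [div_eq_iff (by norm_num : (2:ℝ) ≠ 0)] at h; linarith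
    have hne2 : s / 2 ≠ 1 := by
      intro h; have := hs.2; rw [div_eq_iff (by norm_num : (2:ℝ) ≠ 0)] at h; linarith
    have h := (Real.hasDerivAt_arcsin hne1 hne2).comp s ((hasDerivAt_id s).div_const 2)
    refine h.congr_deriv ?_
    rw [sqrt_half_eq hs]
    field_simp
    exact hrdef
  -- piece 3 : (4-t^2) * sqrt(4-t^2)
  have h3 : HasDerivAt (fun t : ℝ => (4 - t ^ 2) * Real.sqrt (4 - t ^ 2))
      ((0 - 2 * s ^ 1) * r + (4 - s ^ 2) * (-s / r)) s :=
    ((hasDerivAt_const s (4 : ℝ)).sub (hasDerivAt_pow 2 s)).mul hsq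
  -- piece 5 : log (4 - x*t + c * sqrt(4-t^2))
  have hinner : HasDerivAt (fun t : ℝ => 4 - x * t + c * Real.sqrt (4 - t ^ 2))
      (0 - x * 1 + c * (-s / r)) s :=
    (((hasDerivAt_const s (4 : ℝ)).sub ((hasDerivAt_id s).const_mul x)).add (hsq.const_mul c))
  have hlog1 : HasDerivAt (fun t : ℝ => Real.log (4 - x * t + c * Real.sqrt (4 - t ^ 2)))
      ((0 - x * 1 + c * (-s / r)) / (4 - x * s + c * r)) s := by
    have := hinner.log (by simpa using harg.ne')
    simpa using this
  -- piece 6 : log (x - t)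
  have hlog2 : HasDerivAt (fun t : ℝ => Real.log (x - t)) ((0 - 1) / (x - s)) s := by
    have := ((hasDerivAt_const s x).sub (hasDerivAt_id s)).log hxs
    simpa using this
  have hF : HasDerivAt (Gfun x)
      ((4 - x) / 2 * (1 * r + s * (-s / r))
        + (2 * x + 4 * (2 - x) + x * (2 - x) ^ 2) * (1 / r)
        + 1 / 3 * ((0 - 2 * s ^ 1) * r + (4 - s ^ 2) * (-s / r))
        - (2 - x) ^ 2 * (-s / r)
        + (2 - x) ^ 2 * c * ((0 - x * 1 + c * (-s / r)) / (4 - x * s + c * r))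
        - (2 - x) ^ 2 * c * ((0 - 1) / (x - s))) s := by
    unfold Gfun Ffun
    exact (((((h1.const_mul ((4 - x) / 2)).add
      (harcs.const_mul (2 * x + 4 * (2 - x) + x * (2 - x) ^ 2))).add
      (h3.const_mul (1 / 3))).sub (hsq.const_mul ((2 - x) ^ 2))).add
      (hlog1.const_mul ((2 - x) ^ 2 * c))).sub (hlog2.const_mul ((2 - x) ^ 2 * c))
  refine hF.congr_deriv ?_
  have hrne : r ≠ 0 := hr.ne'
  have hlogid : (0 - x * 1 + c * (-s / r)) / (4 - x * s + c * r) - (0 - 1) / (x - s)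
      = c / (r * (x - s)) := by
    field_simp [hrne, hxs, harg.ne']
    linear_combination c * hr2 - r * hc2
  have key : (2 - x) ^ 2 * c * ((0 - x * 1 + c * (-s / r)) / (4 - x * s + c * r))
      - (2 - x) ^ 2 * c * ((0 - 1) / (x - s)) = (2 - x) ^ 2 * c * (c / (r * (x - s))) := by
    rw [← mul_sub, hlogid]
  rw [add_sub_assoc, key]
  field_simp [hrne, hxs]
  linear_combination (-3*x^2 - x*s + 12*x + 12*s - 2*s^2 - 24) * hr2 + (6*x^2 - 24*x + 24) * hc2

lemma psi_eq {s : ℝ} (hs : s ∈ Set.Icc (-2 : ℝ) 2) :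
    (s + 2) ^ ((1 : ℝ)/2) * (2 - s) ^ ((5 : ℝ)/2) = Real.sqrt (4 - s ^ 2) * (2 - s) ^ 2 := by
  rcases eq_or_lt_of_le hs.2 with h2 | h2
  · subst h2
    rw [show (2:ℝ) - 2 = 0 by norm_num, Real.zero_rpow (by norm_num : (5:ℝ)/2 ≠ 0)]
    norm_num
  · have h1 : (0 : ℝ) ≤ s + 2 := by linarith [hs.1]
    have h2' : (0 : ℝ) < 2 - s := by linarith
    have h5 : (2 - s : ℝ) ^ ((5 : ℝ)/2) = (2 - s) ^ 2 * Real.sqrt (2 - s) := by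
      rw [show (5 : ℝ)/2 = ((2 : ℕ) : ℝ) + (1 : ℝ)/2 by norm_num, Real.rpow_add h2',
        Real.rpow_natCast, ← Real.sqrt_eq_rpow]
    rw [← Real.sqrt_eq_rpow, h5, show (4 : ℝ) - s ^ 2 = (s + 2) * (2 - s) by ring,
      Real.sqrt_mul h1]
    ring

lemma continuous_base (x : ℝ) : Continuous fun t : ℝ =>
    (4 - x) / 2 * (t * Real.sqrt (4 - t ^ 2))
      + (2 * x + 4 * (2 - x) + x * (2 - x) ^ 2) * Real.arcsin (t / 2)
      + 1 / 3 * ((4 - t ^ 2) * Real.sqrt (4 - t ^ 2))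
      - (2 - x) ^ 2 * Real.sqrt (4 - t ^ 2) := by
  have hsqc : Continuous fun t : ℝ => Real.sqrt (4 - t ^ 2) :=
    Real.continuous_sqrt.comp (by fun_prop)
  exact ((((continuous_const.mul (continuous_id.mul hsqc)).add
    (continuous_const.mul (Real.continuous_arcsin.comp (continuous_id.div_const 2)))).add
    (continuous_const.mul ((continuous_const.sub (continuous_pow 2)).mul hsqc))).sub
    (continuous_const.mul hsqc))

lemma continuousOn_Gfun {x : ℝ} (hx : x ∈ Set.Ioo (-2 : ℝ) 2) {a b : ℝ}
    (ha : -2 ≤ a) (hb : b ≤ 2) (hxab : x ∉ Set.Icc a b) :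
    ContinuousOn (Gfun x) (Set.Icc a b) := by
  have hlog1 : ∀ s ∈ Set.Icc a b, 4 - x * s + Real.sqrt (4 - x ^ 2) * Real.sqrt (4 - s ^ 2) ≠ 0 := by
    intro s hsab
    have hs1 : -2 ≤ s := le_trans ha hsab.1
    have hs2 : s ≤ 2 := le_trans hsab.2 hb
    have hx4 : x ^ 2 < 4 := by nlinarith [hx.1, hx.2]
    have hs4 : s ^ 2 ≤ 4 := by nlinarith
    have hxs : x * s < 4 := by nlinarith [sq_nonneg (x - s)]
    have : (0:ℝ) ≤ Real.sqrt (4 - x ^ 2) * Real.sqrt (4 - s ^ 2) := by positivity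
    nlinarith
  have hlog2 : ∀ s ∈ Set.Icc a b, x - s ≠ 0 := by
    intro s hsab
    intro h
    exact hxab (by rw [show x = s by linarith [sub_eq_zero.1 h]]; exact hsab)
  unfold Gfun Ffun
  apply ContinuousOn.sub
  · apply ContinuousOn.add
    · exact Continuous.continuousOn (continuous_base x)
    · exact continuousOn_const.mul (ContinuousOn.log (Continuous.continuousOn (by fun_prop)) hlog1)
  · exact continuousOn_const.mul (ContinuousOn.log (Continuous.continuousOn (by fun_prop)) hlog2)

lemma integral_G {x : ℝ} (hx : x ∈ Set.Ioo (-2 : ℝ) 2) {a b : ℝ} (hab : a ≤ b)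
    (ha : -2 ≤ a) (hb : b ≤ 2) (hxab : x ∉ Set.Icc a b) :
    ∫ s in a..b, Real.sqrt (4 - s ^ 2) * (2 - s) ^ 2 / (x - s) = Gfun x b - Gfun x a := by
  apply intervalIntegral.integral_eq_sub_of_hasDeriv_right_of_le hab
  · exact continuousOn_Gfun hx ha hb hxab
  · intro t ht
    have ht2 : t ∈ Set.Ioo (-2 : ℝ) 2 :=
      ⟨lt_of_le_of_lt ha ht.1, lt_of_lt_of_le ht.2 hb⟩
    have htx : t ≠ x := by
      intro h; exact hxab (h ▸ ⟨ht.1.le, ht.2.le⟩)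
    exact (hasDerivAt_Gfun hx ht2 htx).hasDerivWithinAt
  · apply ContinuousOn.intervalIntegrable
    rw [Set.uIcc_of_le hab]
    apply ContinuousOn.div (Continuous.continuousOn (by fun_prop))
      (Continuous.continuousOn (by fun_prop))
    intro s hsab
    intro h
    exact hxab (by rw [show x = s by linarith [sub_eq_zero.1 h]]; exact hsab)

/-- Equilibrium condition for the critical quartic potential: for
`ψ(s) = (1/(10π))(s+2)^{1/2}(2−s)^{5/2}` on `[−2,2]` and
`V(x) = x⁴/20 − 4x³/15 + x²/5 + 8x/5`, for every `x ∈ (−2,2)` the principal value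
`2 p.v.∫_{−2}^{2} ψ(s)/(x−s) ds` equals `V'(x) = x³/5 − 4x²/5 + 2x/5 + 8/5`. -/
theorem equilibrium_condition_critical_quartic :
    let ψ : ℝ → ℝ := fun s => (1 / (10 * π)) * (s + 2) ^ ((1 : ℝ)/2) * (2 - s) ^ ((5 : ℝ)/2)
    ∀ x ∈ Set.Ioo (-2 : ℝ) 2,
      Tendsto (fun ε : ℝ =>
          2 * ((∫ s in (-2 : ℝ)..(x - ε), ψ s / (x - s)) +
               ∫ s in (x + ε)..(2 : ℝ), ψ s / (x - s)))
        (nhdsWithin 0 (Set.Ioi 0))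
        (nhds (x ^ 3 / 5 - 4 * x ^ 2 / 5 + 2 * x / 5 + 8 / 5)) := by
  intro ψ x hx
  have hx1 := hx.1
  have hx2 := hx.2
  have hδ : (0 : ℝ) < min (x + 2) (2 - x) := lt_min (by linarith) (by linarith)
  have hev : ∀ᶠ ε in nhdsWithin (0:ℝ) (Set.Ioi 0), ε ∈ Set.Ioo (0:ℝ) (min (x + 2) (2 - x)) :=
    Ioo_mem_nhdsGT_of_mem ⟨le_refl 0, hδ⟩
  have hπ : (0:ℝ) < π := Real.pi_pos
  -- continuity of Ffun x at x
  have harg0 : 4 - x * x + Real.sqrt (4 - x ^ 2) * Real.sqrt (4 - x ^ 2) ≠ 0 := by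
    have : (0:ℝ) ≤ Real.sqrt (4 - x ^ 2) * Real.sqrt (4 - x ^ 2) := by positivity
    nlinarith
  have hFcont : ContinuousAt (Ffun x) x := by
    unfold Ffun
    apply ContinuousAt.add
    · exact Continuous.continuousAt (continuous_base x)
    · exact (continuousAt_const.mul (ContinuousAt.log (Continuous.continuousAt (by fun_prop)) harg0))
  have htends1 : Tendsto (fun ε : ℝ => Ffun x (x - ε)) (nhds 0) (nhds (Ffun x x)) := by
    have h' : Tendsto (fun ε : ℝ => x - ε) (nhds 0) (nhds x) := by
      have : Tendsto (fun ε : ℝ => x - ε) (nhds 0) (nhds (x - 0)) :=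
        (continuous_const.sub continuous_id).tendsto 0
      simpa using this
    exact Tendsto.comp hFcont h'
  have htends2 : Tendsto (fun ε : ℝ => Ffun x (x + ε)) (nhds 0) (nhds (Ffun x x)) := by
    have h' : Tendsto (fun ε : ℝ => x + ε) (nhds 0) (nhds x) := by
      have : Tendsto (fun ε : ℝ => x + ε) (nhds 0) (nhds (x + 0)) :=
        (continuous_const.add continuous_id).tendsto 0
      simpa using this
    exact Tendsto.comp hFcont h'
  -- value of Gfun at endpoints
  have h2x : (0:ℝ) < 2 - x := by linarith
  have h2x' : (0:ℝ) < 2 + x := by linarith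
  have hval : Gfun x 2 - Gfun x (-2) = (2 * x + 4 * (2 - x) + x * (2 - x) ^ 2) * π := by
    simp only [Gfun, Ffun]
    rw [show (4:ℝ) - 2 ^ 2 = 0 by norm_num, show (4:ℝ) - (-2:ℝ) ^ 2 = 0 by norm_num,
      Real.sqrt_zero, show (2:ℝ)/2 = 1 by norm_num, show (-2:ℝ)/2 = -1 by norm_num,
      Real.arcsin_one, Real.arcsin_neg_one]
    simp only [mul_zero, zero_mul, add_zero, sub_zero]
    rw [show (4:ℝ) - x * 2 = 2 * (2 - x) by ring, show (4:ℝ) - x * (-2) = 2 * (2 + x) by ring,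
      Real.log_mul two_ne_zero h2x.ne', Real.log_mul two_ne_zero h2x'.ne',
      show x - 2 = -(2 - x) by ring, Real.log_neg_eq_log,
      show x - (-2:ℝ) = 2 + x by ring]
    ring
  -- the eventual form
  set φ : ℝ → ℝ := fun ε =>
    2 * (1 / (10 * π)) * ((Ffun x (x - ε) - Ffun x (x + ε)) + (Gfun x 2 - Gfun x (-2))) with hφ
  have hEq : φ =ᶠ[nhdsWithin (0:ℝ) (Set.Ioi 0)] (fun ε : ℝ =>
      2 * ((∫ s in (-2 : ℝ)..(x - ε), ψ s / (x - s)) +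
           ∫ s in (x + ε)..(2 : ℝ), ψ s / (x - s))) := by
    filter_upwards [hev] with ε hε
    have hε1 : (0:ℝ) < ε := hε.1
    have hε2 : ε < x + 2 := lt_of_lt_of_le hε.2 (min_le_left _ _)
    have hε3 : ε < 2 - x := lt_of_lt_of_le hε.2 (min_le_right _ _)
    have hI1 : (∫ s in (-2 : ℝ)..(x - ε), ψ s / (x - s))
        = 1 / (10 * π) * (Gfun x (x - ε) - Gfun x (-2)) := by
      rw [← integral_G hx (by linarith) (by linarith) (by linarith)
        (by intro h; exact absurd h.2 (by linarith))]
      rw [← intervalIntegral.integral_const_mul]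
      apply intervalIntegral.integral_congr
      intro s hs
      rw [Set.uIcc_of_le (by linarith : (-2:ℝ) ≤ x - ε)] at hs
      have hs' : s ∈ Set.Icc (-2:ℝ) 2 := ⟨hs.1, by linarith [hs.2]⟩
      show ψ s / (x - s) = _
      simp only [ψ]
      rw [mul_assoc, psi_eq hs']
      ring
    have hI2 : (∫ s in (x + ε)..(2 : ℝ), ψ s / (x - s))
        = 1 / (10 * π) * (Gfun x 2 - Gfun x (x + ε)) := by
      rw [← integral_G hx (by linarith) (by linarith) (by linarith)
        (by intro h; exact absurd h.1 (by linarith))]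
      rw [← intervalIntegral.integral_const_mul]
      apply intervalIntegral.integral_congr
      intro s hs
      rw [Set.uIcc_of_le (by linarith : x + ε ≤ (2:ℝ))] at hs
      have hs' : s ∈ Set.Icc (-2:ℝ) 2 := ⟨by linarith [hs.1], hs.2⟩
      show ψ s / (x - s) = _
      simp only [ψ]
      rw [mul_assoc, psi_eq hs']
      ring
    rw [hI1, hI2]
    have hcancel : Gfun x (x - ε) - Gfun x (x + ε) = Ffun x (x - ε) - Ffun x (x + ε) := by
      simp only [Gfun]
      rw [show x - (x - ε) = ε by ring, show x - (x + ε) = -ε by ring, Real.log_neg_eq_log]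
      ring
    simp only [hφ]
    have : Gfun x (x - ε) = Ffun x (x - ε) - Ffun x (x + ε) + Gfun x (x + ε) := by
      linarith [hcancel]
    rw [this]
    ring
  apply Tendsto.congr' hEq
  have hlim : Tendsto φ (nhdsWithin (0:ℝ) (Set.Ioi 0))
      (nhds (2 * (1 / (10 * π)) * ((Ffun x x - Ffun x x) + (Gfun x 2 - Gfun x (-2))))) := by
    apply Tendsto.const_mul
    exact (((htends1.sub htends2).mono_left nhdsWithin_le_nhds).add tendsto_const_nhds)
  convert hlim using 2
  rw [sub_self, zero_add, hval]
  field_simp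
  ring
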